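/- In the folded hypercube FQ_n, for every pair of vertices u, v with I(u,v) ≤ ⌊n/2⌋ − 1, there exists a path from u to v of length I(u,v) + 1 whose first edge is a complementary edge (Dim = 0) and whose remaining edges are hypercube edges with strictly increasing Dim values. -/

import Mathlib

/-- In FQ_n, if `I(u,v) ≤ ⌊n/2⌋ - 1` then there is a path from `u` to `v` of
length `I(u,v) + 1` whose first edge is the complementary edge (Dim = 0) and
whose remaining edges are hypercube edges with strictly increasing
dimensions. -/
theorem stmt_6 (n : ℕ) (u v : Fin n → Bool)
    (hI : (Finset.univ.filter (fun i => u i = v i)).card ≤ n / 2 - 1) :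
    ∃ (w : Fin ((Finset.univ.filter (fun i => u i = v i)).card + 2) → (Fin n → Bool))
      (d : Fin (Finset.univ.filter (fun i => u i = v i)).card → Fin n),
      w 0 = u ∧ w (Fin.last _) = v ∧
      w 1 = (fun i => ! u i) ∧ StrictMono d ∧
      ∀ j, w j.succ.succ =
        Function.update (w j.succ.castSucc) (d j) (! w j.succ.castSucc (d j)) := by
  classical
  set s := Finset.univ.filter (fun i => u i = v i) with hs
  set k := s.card with hk
  let e : Fin k ≃o {x // x ∈ s} := s.orderIsoOfFin rfl
  let d : Fin k → Fin n := fun t => (e t : Fin n)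
  have hdmono : StrictMono d := fun a b hab => by
    simpa [d] using (e.strictMono hab)
  have hdinj : Function.Injective d := hdmono.injective
  have hdmem : ∀ t, u (d t) = v (d t) := fun t => by
    exact (Finset.mem_filter.mp (e t).2).2
  have hdsurj : ∀ i : Fin n, u i = v i → ∃ t, d t = i := fun i hi => by
    have hi' : i ∈ s := Finset.mem_filter.mpr ⟨Finset.mem_univ i, hi⟩
    exact ⟨e.symm ⟨i, hi'⟩, by simp [d]⟩
  let w : Fin (k + 2) → (Fin n → Bool) := fun m =>
    if (m : ℕ) = 0 then u
    else fun i => if ∃ t : Fin k, (t : ℕ) + 1 < (m : ℕ) ∧ d t = i then v i else !u i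
  have hw : ∀ (m : Fin (k + 2)) (c : ℕ), (m : ℕ) = c + 1 →
      w m = fun i => if ∃ t : Fin k, (t : ℕ) + 1 < c + 1 ∧ d t = i then v i else !u i := by
    intro m c hm
    simp only [w, hm]
    rw [if_neg (by omega)]
  refine ⟨w, d, ?_, ?_, ?_, hdmono, ?_⟩
  · simp [w]
  · rw [hw (Fin.last (k + 1)) k rfl]
    funext i
    by_cases hi : u i = v i
    · obtain ⟨t, ht⟩ := hdsurj i hi
      rw [if_pos ⟨t, by omega, ht⟩]
    · rw [if_neg]
      · cases hu : u i <;> cases hv : v i <;> simp_all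
      · rintro ⟨t, -, rfl⟩; exact hi (hdmem t)
  · rw [hw 1 0 (Fin.val_one k)]
    funext i
    rw [if_neg (by rintro ⟨t, ht, -⟩; omega)]
  · intro j
    rw [hw j.succ.succ ((j : ℕ) + 1) rfl, hw j.succ.castSucc (j : ℕ) rfl]
    funext i
    by_cases hij : i = d j
    · subst hij
      rw [Function.update_self]
      rw [if_pos ⟨j, by omega, rfl⟩]
      beta_reduce
      rw [if_neg (by rintro ⟨t, ht, hteq⟩; have := hdinj hteq; omega)]
      cases hu : u (d j) <;> simp_all [hdmem j]
    · rw [Function.update_of_ne hij]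
      congr 1
      simp only [eq_iff_iff]
      constructor
      · rintro ⟨t, ht, rfl⟩
        refine ⟨t, ?_, rfl⟩
        rcases Nat.lt_or_ge (t : ℕ) (j : ℕ) with h | h
        · omega
        · exact absurd (congrArg d (Fin.ext (by omega) : t = j)) hij
      · rintro ⟨t, ht, rfl⟩; exact ⟨t, by omega, rfl⟩
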